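/- Let G[S] be a locally h-clique densest subgraph of G. Then for every vertex u ∈ S, the h-clique compact number of u equals the h-clique density of G[S], i.e., φ_h(u) = d_h(G[S]). In particular, for every ρ ≥ 0 and every S'' ⊆ V with u ∈ S'' such that G[S''] is h-clique ρ-compact, one has ρ ≤ d_h(G[S]). -/

import Mathlib

open Finset

variable {V : Type*} [Fintype V] [DecidableEq V]

/-- `Ψ_h(G[S])`: the set of `h`-cliques of `G` all of whose vertices lie in `S`
(equivalently, the `h`-cliques of the induced subgraph `G[S]`). -/
def cliquesIn (G : SimpleGraph V) [DecidableRel G.Adj] (h : ℕ) (S : Finset V) :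
    Finset (Finset V) :=
  Finset.univ.filter fun c => G.IsNClique h c ∧ c ⊆ S

/-- the `h`-clique density `d_h(G[S]) = |Ψ_h(G[S])| / |S|`. -/
noncomputable def cliqueDensity (G : SimpleGraph V) [DecidableRel G.Adj] (h : ℕ)
    (S : Finset V) : ℝ :=
  ((cliquesIn G h S).card : ℝ) / (S.card : ℝ)

/-- `G[S]` is `h`-clique `ρ`-compact: `S` is nonempty, the induced subgraph is
connected, and removing any nonempty `U ⊆ S` removes at least `ρ·|U|` `h`-cliques. -/
def IsCliqueCompact (G : SimpleGraph V) [DecidableRel G.Adj] (h : ℕ) (ρ : ℝ)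
    (S : Finset V) : Prop :=
  S.Nonempty ∧ (G.induce (S : Set V)).Connected ∧
    ∀ U ⊆ S, U.Nonempty →
      ρ * (U.card : ℝ) ≤ ((cliquesIn G h S).card : ℝ) - ((cliquesIn G h (S \ U)).card : ℝ)

/-- `G[S]` is a locally `h`-clique densest subgraph of `G`. -/
def IsLhCDS (G : SimpleGraph V) [DecidableRel G.Adj] (h : ℕ) (S : Finset V) : Prop :=
  IsCliqueCompact G h (cliqueDensity G h S) S ∧
    ¬ ∃ S' : Finset V, S ⊂ S' ∧ IsCliqueCompact G h (cliqueDensity G h S) S'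

/-- the `h`-clique compact number `φ_h(u)` of a vertex `u`. -/
noncomputable def compactNumber (G : SimpleGraph V) [DecidableRel G.Adj] (h : ℕ)
    (u : V) : ℝ :=
  sSup {ρ : ℝ | 0 ≤ ρ ∧ ∃ S : Finset V, u ∈ S ∧ IsCliqueCompact G h ρ S}

/-- `α` is a feasible solution to the convex program `CP(G,h)`: each `h`-clique
distributes a unit weight, nonnegatively, among its vertices. -/
def CPFeasible (G : SimpleGraph V) [DecidableRel G.Adj] (h : ℕ)
    (α : Finset V → V → ℝ) : Prop :=
  (∀ ψ ∈ cliquesIn G h Finset.univ, ∀ u ∈ ψ, 0 ≤ α ψ u) ∧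
    (∀ ψ ∈ cliquesIn G h Finset.univ, ∑ u ∈ ψ, α ψ u = 1)

/-- `r(u)`: the total weight received by vertex `u` under `α`. -/
def cpR (G : SimpleGraph V) [DecidableRel G.Adj] (h : ℕ) (α : Finset V → V → ℝ)
    (u : V) : ℝ :=
  ∑ ψ ∈ (cliquesIn G h Finset.univ).filter (fun ψ => u ∈ ψ), α ψ u

/-- `α` is an optimal solution to `CP(G,h)`: it is feasible and minimizes
`Σ_u r(u)²` over all feasible solutions. -/
def CPOptimal (G : SimpleGraph V) [DecidableRel G.Adj] (h : ℕ)
    (α : Finset V → V → ℝ) : Prop :=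
  CPFeasible G h α ∧
    ∀ β : Finset V → V → ℝ, CPFeasible G h β →
      ∑ u : V, (cpR G h α u) ^ 2 ≤ ∑ u : V, (cpR G h β u) ^ 2

lemma cliquesIn_mono (G : SimpleGraph V) [DecidableRel G.Adj] (h : ℕ) {T S : Finset V}
    (hTS : T ⊆ S) : cliquesIn G h T ⊆ cliquesIn G h S := by
  intro c hc
  simp only [cliquesIn, mem_filter] at hc ⊢
  exact ⟨hc.1, hc.2.1, hc.2.2.trans hTS⟩

lemma union_compact (G : SimpleGraph V) [DecidableRel G.Adj] (h : ℕ) {d ρ : ℝ}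
    {S S'' : Finset V} {u : V} (hd : 0 ≤ d) (hdρ : d ≤ ρ)
    (hSc : IsCliqueCompact G h d S) (hS''c : IsCliqueCompact G h ρ S'')
    (hu : u ∈ S) (hu'' : u ∈ S'') : IsCliqueCompact G h d (S ∪ S'') := by
  obtain ⟨hSne, hScon, hSrem⟩ := hSc
  obtain ⟨hS''ne, hS''con, hS''rem⟩ := hS''c
  refine ⟨hSne.mono subset_union_left, ?_, ?_⟩
  · have := SimpleGraph.induce_union_connected hScon.preconnected hS''con.preconnected ⟨u, hu, hu''⟩
    rwa [Finset.coe_union]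
  · intro U hU hUne
    set U1 := U ∩ S'' with hU1
    set U2 := U \ S'' with hU2
    have hU2S : U2 ⊆ S := by
      intro x hx
      obtain ⟨hxU, hxn⟩ := mem_sdiff.mp hx
      rcases mem_union.mp (hU hxU) with h1 | h2
      · exact h1
      · exact absurd h2 hxn
    set D1 := cliquesIn G h S'' \ cliquesIn G h (S'' \ U1) with hD1def
    set D2 := cliquesIn G h S \ cliquesIn G h (S \ U2) with hD2def
    set B := cliquesIn G h (S ∪ S'') \ cliquesIn G h ((S ∪ S'') \ U) with hBdef
    have hD1B : D1 ⊆ B := by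
      intro c hc
      simp only [hD1def, hBdef, cliquesIn, mem_sdiff, mem_filter, mem_univ, true_and] at hc ⊢
      obtain ⟨⟨hclique, hcS''⟩, hnot⟩ := hc
      obtain ⟨x, hxc, hxn⟩ := Finset.not_subset.mp fun hsub => hnot ⟨hclique, hsub⟩
      have hxU : x ∈ U := by
        by_contra hxU
        exact hxn (mem_sdiff.mpr ⟨hcS'' hxc, fun hm => hxU (mem_inter.mp hm).1⟩)
      refine ⟨⟨hclique, hcS''.trans subset_union_right⟩, ?_⟩
      rintro ⟨-, hsub⟩
      exact (mem_sdiff.mp (hsub hxc)).2 hxU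
    have hD2B : D2 ⊆ B := by
      intro c hc
      simp only [hD2def, hBdef, cliquesIn, mem_sdiff, mem_filter, mem_univ, true_and] at hc ⊢
      obtain ⟨⟨hclique, hcS⟩, hnot⟩ := hc
      obtain ⟨x, hxc, hxn⟩ := Finset.not_subset.mp fun hsub => hnot ⟨hclique, hsub⟩
      have hxU2 : x ∈ U2 := by
        by_contra hxU2
        exact hxn (mem_sdiff.mpr ⟨hcS hxc, hxU2⟩)
      refine ⟨⟨hclique, hcS.trans subset_union_left⟩, ?_⟩
      rintro ⟨-, hsub⟩
      exact (mem_sdiff.mp (hsub hxc)).2 (mem_sdiff.mp hxU2).1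
    have hdisj : Disjoint D1 D2 := by
      rw [Finset.disjoint_left]
      intro c hc1 hc2
      simp only [hD1def, hD2def, cliquesIn, mem_sdiff, mem_filter, mem_univ, true_and] at hc1 hc2
      obtain ⟨⟨hclique, hcS''⟩, -⟩ := hc1
      obtain ⟨⟨-, hcS⟩, hnot⟩ := hc2
      obtain ⟨x, hxc, hxn⟩ := Finset.not_subset.mp fun hsub => hnot ⟨hclique, hsub⟩
      have hxU2 : x ∈ U2 := by
        by_contra hxU2
        exact hxn (mem_sdiff.mpr ⟨hcS hxc, hxU2⟩)
      exact (mem_sdiff.mp hxU2).2 (hcS'' hxc)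
    have h1 : d * (U1.card : ℝ) ≤ (D1.card : ℝ) := by
      rcases U1.eq_empty_or_nonempty with he | hne
      · simp [he]
      · have hr := hS''rem U1 inter_subset_right hne
        have hcast : ((cliquesIn G h S'').card : ℝ) - ((cliquesIn G h (S'' \ U1)).card : ℝ)
            = (D1.card : ℝ) := by
          rw [hD1def, card_sdiff_of_subset (cliquesIn_mono G h sdiff_subset),
            Nat.cast_sub (card_le_card (cliquesIn_mono G h sdiff_subset))]
        have : d * (U1.card : ℝ) ≤ ρ * (U1.card : ℝ) :=
          mul_le_mul_of_nonneg_right hdρ (by positivity)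
        linarith
    have h2 : d * (U2.card : ℝ) ≤ (D2.card : ℝ) := by
      rcases U2.eq_empty_or_nonempty with he | hne
      · simp [he]
      · have hr := hSrem U2 hU2S hne
        have hcast : ((cliquesIn G h S).card : ℝ) - ((cliquesIn G h (S \ U2)).card : ℝ)
            = (D2.card : ℝ) := by
          rw [hD2def, card_sdiff_of_subset (cliquesIn_mono G h sdiff_subset),
            Nat.cast_sub (card_le_card (cliquesIn_mono G h sdiff_subset))]
        linarith
    have hUcard : (U1.card : ℝ) + (U2.card : ℝ) = (U.card : ℝ) := by
      rw [← Nat.cast_add]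
      exact_mod_cast congrArg (Nat.cast : ℕ → ℝ) (Finset.card_inter_add_card_sdiff U S'')
    have hBcard : (D1.card : ℝ) + (D2.card : ℝ) ≤ (B.card : ℝ) := by
      have := Finset.card_union_of_disjoint hdisj
      have hle := Finset.card_le_card (Finset.union_subset hD1B hD2B)
      rw [this] at hle
      exact_mod_cast hle
    have hBeq : ((cliquesIn G h (S ∪ S'')).card : ℝ)
        - ((cliquesIn G h ((S ∪ S'') \ U)).card : ℝ) = (B.card : ℝ) := by
      rw [hBdef, card_sdiff_of_subset (cliquesIn_mono G h sdiff_subset),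
        Nat.cast_sub (card_le_card (cliquesIn_mono G h sdiff_subset))]
    calc d * (U.card : ℝ) = d * (U1.card : ℝ) + d * (U2.card : ℝ) := by rw [← hUcard]; ring
      _ ≤ (D1.card : ℝ) + (D2.card : ℝ) := add_le_add h1 h2
      _ ≤ (B.card : ℝ) := hBcard
      _ = _ := hBeq.symm

/-- If `G[S]` is an LhCDS, then for every `u ∈ S` the `h`-clique
compact number of `u` equals `d_h(G[S])`; in particular every `h`-clique
`ρ`-compact subgraph containing `u` (with `ρ ≥ 0`) has `ρ ≤ d_h(G[S])`. -/
theorem stmt_4 (G : SimpleGraph V) [DecidableRel G.Adj] (h : ℕ) (hh : 2 ≤ h)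
    (S : Finset V) (hS : IsLhCDS G h S) (u : V) (hu : u ∈ S) :
    compactNumber G h u = cliqueDensity G h S ∧
      ∀ ρ : ℝ, 0 ≤ ρ → ∀ S'' : Finset V, u ∈ S'' →
        IsCliqueCompact G h ρ S'' → ρ ≤ cliqueDensity G h S := by
  obtain ⟨hScomp, hmax⟩ := hS
  set d := cliqueDensity G h S with hddef
  have hd0 : 0 ≤ d := div_nonneg (Nat.cast_nonneg _) (Nat.cast_nonneg _)
  have hSne : S.Nonempty := hScomp.1
  have hScard : (0 : ℝ) < (S.card : ℝ) := by exact_mod_cast card_pos.mpr hSne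
  have hΨS : ((cliquesIn G h S).card : ℝ) = d * (S.card : ℝ) := by
    rw [hddef, cliqueDensity, div_mul_cancel₀ _ (ne_of_gt hScard)]
  have key : ∀ ρ : ℝ, 0 ≤ ρ → ∀ S'' : Finset V, u ∈ S'' →
      IsCliqueCompact G h ρ S'' → ρ ≤ d := by
    intro ρ hρ0 S'' huS'' hcomp
    by_contra hlt
    push_neg at hlt
    have hdρ : d ≤ ρ := hlt.le
    have hun : IsCliqueCompact G h d (S ∪ S'') :=
      union_compact G h hd0 hdρ hScomp hcomp hu huS''
    have hsub : S'' ⊆ S := by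
      by_contra hns
      refine hmax ⟨S ∪ S'', ⟨subset_union_left, fun hc => ?_⟩, hun⟩
      exact hns fun x hx => hc (mem_union_right _ hx)
    obtain ⟨hS''ne, -, hrem⟩ := hcomp
    have hScard'' : (0 : ℝ) < (S''.card : ℝ) := by exact_mod_cast card_pos.mpr hS''ne
    have h1 : ρ * (S''.card : ℝ) ≤ ((cliquesIn G h S'').card : ℝ) := by
      have := hrem S'' (subset_refl _) hS''ne
      have hnn : (0 : ℝ) ≤ ((cliquesIn G h (S'' \ S'')).card : ℝ) := Nat.cast_nonneg _
      linarith
    have h2 : ((cliquesIn G h S'').card : ℝ) ≤ d * (S''.card : ℝ) := by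
      rcases eq_or_ne S'' S with heq | hne
      · rw [heq, hΨS]
      · have hU : (S \ S'').Nonempty := by
          rw [sdiff_nonempty]
          exact fun hc => hne (subset_antisymm hsub hc)
        have hr := hScomp.2.2 (S \ S'') sdiff_subset hU
        rw [Finset.sdiff_sdiff_eq_self hsub] at hr
        have hcd : ((S \ S'').card : ℝ) = (S.card : ℝ) - (S''.card : ℝ) := by
          rw [card_sdiff_of_subset hsub, Nat.cast_sub (card_le_card hsub)]
        rw [hcd] at hr
        nlinarith
    have : ρ ≤ d := le_of_mul_le_mul_right
      (by rw [mul_comm ρ, mul_comm d]; linarith) hScard''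
    exact absurd this (not_le.mpr hlt)
  refine ⟨?_, key⟩
  have hmem : d ∈ {ρ : ℝ | 0 ≤ ρ ∧ ∃ T : Finset V, u ∈ T ∧ IsCliqueCompact G h ρ T} :=
    ⟨hd0, S, hu, hScomp⟩
  have hub : ∀ ρ ∈ {ρ : ℝ | 0 ≤ ρ ∧ ∃ T : Finset V, u ∈ T ∧ IsCliqueCompact G h ρ T}, ρ ≤ d := by
    rintro ρ ⟨hρ0, T, huT, hT⟩
    exact key ρ hρ0 T huT hT
  rw [compactNumber]
  exact le_antisymm (csSup_le ⟨d, hmem⟩ hub) (le_csSup ⟨d, hub⟩ hmem)
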